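/- arXiv:2005.12467 — 5 statements merged into one kernel-verified Lean document; each statement's English description precedes it below -/
import Mathlib

section
/- Define Φ : ℝ² → ℝ² by Φ(ξ) = (ξ₁√(1+ξ₂²) + ξ₂√(1+ξ₁²), ξ₂ − ξ₁) / (√(1+ξ₁²) + √(1+ξ₂²)). Then for every ξ = (ξ₁,ξ₂) ∈ ℝ², the point Φ(ξ) lies on the line ℓ^+_{(ξ₁,0)}, the spatial projection of the ruling of the hyperboloid through (φ((ξ₁,0)), ξ₁, 0), parametrized by t ↦ (ξ₁,0) + t(1+ξ₁², √(1+ξ₁²)) (since φ((ξ₁,0)) = √(1+ξ₁²)). -/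
/-- `Φ(ξ)` lies on the projected ruling line `ℓ⁺_{(ξ₁,0)}`,
parametrized by `t ↦ (ξ₁,0) + t(1+ξ₁², √(1+ξ₁²))`. -/
theorem Phi_on_plus_ruling (ξ₁ ξ₂ : ℝ) :
    ∃ t : ℝ,
      (ξ₁ * Real.sqrt (1 + ξ₂ ^ 2) + ξ₂ * Real.sqrt (1 + ξ₁ ^ 2))
          / (Real.sqrt (1 + ξ₁ ^ 2) + Real.sqrt (1 + ξ₂ ^ 2))
        = ξ₁ + t * (1 + ξ₁ ^ 2) ∧
      (ξ₂ - ξ₁) / (Real.sqrt (1 + ξ₁ ^ 2) + Real.sqrt (1 + ξ₂ ^ 2))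
        = t * Real.sqrt (1 + ξ₁ ^ 2) := by
  set a := Real.sqrt (1 + ξ₁ ^ 2) with ha'
  set b := Real.sqrt (1 + ξ₂ ^ 2) with hb'
  have ha : 0 < a := Real.sqrt_pos.mpr (by positivity)
  have hb : 0 < b := Real.sqrt_pos.mpr (by positivity)
  have ha2 : a ^ 2 = 1 + ξ₁ ^ 2 := Real.sq_sqrt (by positivity)
  refine ⟨(ξ₂ - ξ₁) / (a * (a + b)), ?_, ?_⟩
  · rw [← ha2]; field_simp; ring
  · field_simp
end

section
/- Define Φ : ℝ² → ℝ² by Φ(ξ) = (ξ₁√(1+ξ₂²) + ξ₂√(1+ξ₁²), ξ₂ − ξ₁) / (√(1+ξ₁²) + √(1+ξ₂²)). Then for every ξ ∈ ℝ², Φ(ξ) lies on the line ℓ^−_{(ξ₂,0)} parametrized by t ↦ (ξ₂,0) + t(1+ξ₂², −√(1+ξ₂²)). -/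
/-- `Φ(ξ)` lies on the projected ruling line `ℓ⁻_{(ξ₂,0)}`,
parametrized by `t ↦ (ξ₂,0) + t(1+ξ₂², −√(1+ξ₂²))`. -/
theorem Phi_on_minus_ruling (ξ₁ ξ₂ : ℝ) :
    ∃ t : ℝ,
      (ξ₁ * Real.sqrt (1 + ξ₂ ^ 2) + ξ₂ * Real.sqrt (1 + ξ₁ ^ 2))
          / (Real.sqrt (1 + ξ₁ ^ 2) + Real.sqrt (1 + ξ₂ ^ 2))
        = ξ₂ + t * (1 + ξ₂ ^ 2) ∧
      (ξ₂ - ξ₁) / (Real.sqrt (1 + ξ₁ ^ 2) + Real.sqrt (1 + ξ₂ ^ 2))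
        = t * (-Real.sqrt (1 + ξ₂ ^ 2)) := by
  have hA : (0:ℝ) < Real.sqrt (1 + ξ₁ ^ 2) := Real.sqrt_pos.2 (by positivity)
  have hB : (0:ℝ) < Real.sqrt (1 + ξ₂ ^ 2) := Real.sqrt_pos.2 (by positivity)
  have hBsq : Real.sqrt (1 + ξ₂ ^ 2) ^ 2 = 1 + ξ₂ ^ 2 :=
    Real.sq_sqrt (by positivity)
  have hS : Real.sqrt (1 + ξ₁ ^ 2) + Real.sqrt (1 + ξ₂ ^ 2) ≠ 0 := by positivity
  refine ⟨(ξ₁ - ξ₂) / ((Real.sqrt (1 + ξ₁ ^ 2) + Real.sqrt (1 + ξ₂ ^ 2)) *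
      Real.sqrt (1 + ξ₂ ^ 2)), ?_, ?_⟩
  · field_simp
    linear_combination (ξ₁ - ξ₂) * hBsq
  · field_simp
    ring
end

section
/- For all ξ, ζ in the interior of Ω (where φ > 0), the Lorentz separation satisfies dist_L(ξ,ζ) ≤ C·|ξ − ζ| for ξ, ζ restricted to the disc |ξ|,|ζ| ≤ 1/10, for some absolute constant C. Equivalently, 2|1 + ξ₁ζ₁ − ξ₂ζ₂ − φ(ξ)φ(ζ)| ≤ C²·|ξ − ζ|². -/
private lemma cauchy_aux (a b c d : ℝ) :
    (a * b - c * d) ^ 2 ≤ (a ^ 2 + c ^ 2) * (b ^ 2 + d ^ 2) := by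
  nlinarith [sq_nonneg (a * d + c * b)]

private lemma sum_sq_aux (a b c d : ℝ) (h1 : a ^ 2 + c ^ 2 ≤ 1 / 100)
    (h2 : b ^ 2 + d ^ 2 ≤ 1 / 100) : (a + b) ^ 2 + (c + d) ^ 2 ≤ 1 := by
  nlinarith [sq_nonneg (a - b), sq_nonneg (c - d)]

set_option maxHeartbeats 1000000 in
/-- On the disc `|ξ|, |ζ| ≤ 1/10` (inside the interior of `Ω`), the Lorentz
separation satisfies `dist_L(ξ,ζ) ≤ C|ξ − ζ|` for an absolute constant `C`. -/
theorem lorentz_separation_le_dist :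
    ∃ C : ℝ, C > 0 ∧ ∀ ξ₁ ξ₂ ζ₁ ζ₂ : ℝ,
      1 + ξ₁ ^ 2 - ξ₂ ^ 2 > 0 → 1 + ζ₁ ^ 2 - ζ₂ ^ 2 > 0 →
      Real.sqrt (ξ₁ ^ 2 + ξ₂ ^ 2) ≤ 1 / 10 → Real.sqrt (ζ₁ ^ 2 + ζ₂ ^ 2) ≤ 1 / 10 →
      Real.sqrt (2 * |1 + ξ₁ * ζ₁ - ξ₂ * ζ₂
          - Real.sqrt (1 + ξ₁ ^ 2 - ξ₂ ^ 2) * Real.sqrt (1 + ζ₁ ^ 2 - ζ₂ ^ 2)|)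
        ≤ C * Real.sqrt ((ξ₁ - ζ₁) ^ 2 + (ξ₂ - ζ₂) ^ 2) := by
  refine ⟨2, by norm_num, fun ξ₁ ξ₂ ζ₁ ζ₂ h1 h2 hx hz => ?_⟩
  set φ := Real.sqrt (1 + ξ₁ ^ 2 - ξ₂ ^ 2) with hφdef
  set ψ := Real.sqrt (1 + ζ₁ ^ 2 - ζ₂ ^ 2) with hψdef
  have hφ2 : φ ^ 2 = 1 + ξ₁ ^ 2 - ξ₂ ^ 2 := Real.sq_sqrt h1.le
  have hψ2 : ψ ^ 2 = 1 + ζ₁ ^ 2 - ζ₂ ^ 2 := Real.sq_sqrt h2.le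
  have hφpos : 0 < φ := Real.sqrt_pos.mpr h1
  have hψpos : 0 < ψ := Real.sqrt_pos.mpr h2
  have hxs : ξ₁ ^ 2 + ξ₂ ^ 2 ≤ 1 / 100 := by
    have h := Real.sq_sqrt (by positivity : (0:ℝ) ≤ ξ₁ ^ 2 + ξ₂ ^ 2)
    nlinarith [Real.sqrt_nonneg (ξ₁ ^ 2 + ξ₂ ^ 2)]
  have hzs : ζ₁ ^ 2 + ζ₂ ^ 2 ≤ 1 / 100 := by
    have h := Real.sq_sqrt (by positivity : (0:ℝ) ≤ ζ₁ ^ 2 + ζ₂ ^ 2)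
    nlinarith [Real.sqrt_nonneg (ζ₁ ^ 2 + ζ₂ ^ 2)]
  have hφge : (1:ℝ) / 2 ≤ φ := by nlinarith
  have hψge : (1:ℝ) / 2 ≤ ψ := by nlinarith
  -- key bound: (φ - ψ)^2 ≤ (ξ₁-ζ₁)^2 + (ξ₂-ζ₂)^2
  have hd : (0:ℝ) ≤ (ξ₁ - ζ₁) ^ 2 + (ξ₂ - ζ₂) ^ 2 := by positivity
  have hkey : (φ - ψ) ^ 2 ≤ (ξ₁ - ζ₁) ^ 2 + (ξ₂ - ζ₂) ^ 2 := by
    have hsum : (1:ℝ) ≤ φ + ψ := by linarith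
    have hprod : (φ - ψ) ^ 2 * (φ + ψ) ^ 2 = (φ ^ 2 - ψ ^ 2) ^ 2 := by ring
    have hst : (ξ₁ + ζ₁) ^ 2 + (ξ₂ + ζ₂) ^ 2 ≤ 1 := sum_sq_aux _ _ _ _ hxs hzs
    have cauchy : ((ξ₁ - ζ₁) * (ξ₁ + ζ₁) - (ξ₂ - ζ₂) * (ξ₂ + ζ₂)) ^ 2
        ≤ ((ξ₁ - ζ₁) ^ 2 + (ξ₂ - ζ₂) ^ 2) * ((ξ₁ + ζ₁) ^ 2 + (ξ₂ + ζ₂) ^ 2) :=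
      cauchy_aux _ _ _ _
    have hA : (φ ^ 2 - ψ ^ 2) ^ 2 ≤ (ξ₁ - ζ₁) ^ 2 + (ξ₂ - ζ₂) ^ 2 := by
      have heq : φ ^ 2 - ψ ^ 2 = (ξ₁ - ζ₁) * (ξ₁ + ζ₁) - (ξ₂ - ζ₂) * (ξ₂ + ζ₂) := by
        rw [hφ2, hψ2]; ring
      rw [heq]
      calc ((ξ₁ - ζ₁) * (ξ₁ + ζ₁) - (ξ₂ - ζ₂) * (ξ₂ + ζ₂)) ^ 2
          ≤ ((ξ₁ - ζ₁) ^ 2 + (ξ₂ - ζ₂) ^ 2) * ((ξ₁ + ζ₁) ^ 2 + (ξ₂ + ζ₂) ^ 2) := cauchy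
        _ ≤ (ξ₁ - ζ₁) ^ 2 + (ξ₂ - ζ₂) ^ 2 := mul_le_of_le_one_right hd hst
    have h1' : (1:ℝ) ≤ (φ + ψ) ^ 2 := by nlinarith
    calc (φ - ψ) ^ 2 ≤ (φ - ψ) ^ 2 * (φ + ψ) ^ 2 :=
          le_mul_of_one_le_right (sq_nonneg _) h1'
      _ = (φ ^ 2 - ψ ^ 2) ^ 2 := hprod
      _ ≤ (ξ₁ - ζ₁) ^ 2 + (ξ₂ - ζ₂) ^ 2 := hA
  have habs : 2 * |1 + ξ₁ * ζ₁ - ξ₂ * ζ₂ - φ * ψ|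
      ≤ 4 * ((ξ₁ - ζ₁) ^ 2 + (ξ₂ - ζ₂) ^ 2) := by
    have hE : 2 * (1 + ξ₁ * ζ₁ - ξ₂ * ζ₂ - φ * ψ)
        = (φ - ψ) ^ 2 - (ξ₁ - ζ₁) ^ 2 + (ξ₂ - ζ₂) ^ 2 := by
      linear_combination -hφ2 - hψ2
    rcases abs_cases (1 + ξ₁ * ζ₁ - ξ₂ * ζ₂ - φ * ψ) with ⟨h, _⟩ | ⟨h, _⟩ <;>
      rw [h] <;>
      linarith [hE, hkey, sq_nonneg (φ - ψ), sq_nonneg (ξ₁ - ζ₁), sq_nonneg (ξ₂ - ζ₂)]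
  calc Real.sqrt (2 * |1 + ξ₁ * ζ₁ - ξ₂ * ζ₂ - φ * ψ|)
      ≤ Real.sqrt (4 * ((ξ₁ - ζ₁) ^ 2 + (ξ₂ - ζ₂) ^ 2)) := Real.sqrt_le_sqrt habs
    _ = 2 * Real.sqrt ((ξ₁ - ζ₁) ^ 2 + (ξ₂ - ζ₂) ^ 2) := by
        rw [show (4:ℝ) * ((ξ₁ - ζ₁) ^ 2 + (ξ₂ - ζ₂) ^ 2)
            = (2 * Real.sqrt ((ξ₁ - ζ₁) ^ 2 + (ξ₂ - ζ₂) ^ 2)) ^ 2 by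
          rw [mul_pow, Real.sq_sqrt hd]; ring]
        exact Real.sqrt_sq (by positivity)
end

section
/- Let (τ,ξ) lie on the hyperboloid τ² = 1 + ξ₁² − ξ₂², and suppose (τ',ξ') is another point on the hyperboloid with ⟦(τ,ξ)−(τ',ξ')⟧ = 0 and (τ',ξ') ≠ (τ,ξ). Then (τ',ξ') lies on one of the two rulings through (τ,ξ): there exist t ∈ ℝ and a sign ± with (τ',ξ') = (τ,ξ) + t(ξ₁τ ∓ ξ₂, 1+ξ₁², ξ₁ξ₂ ± τ). -/
/-- Two distinct points of the hyperboloid whose difference has Lorentz norm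
zero lie on a common ruling. -/
theorem null_separated_points_share_ruling (τ ξ₁ ξ₂ τ' ξ₁' ξ₂' : ℝ)
    (h : τ ^ 2 = 1 + ξ₁ ^ 2 - ξ₂ ^ 2) (h' : τ' ^ 2 = 1 + ξ₁' ^ 2 - ξ₂' ^ 2)
    (hnull : Real.sqrt |(τ - τ') ^ 2 - (ξ₁ - ξ₁') ^ 2 + (ξ₂ - ξ₂') ^ 2| = 0)
    (hne : (τ', ξ₁', ξ₂') ≠ (τ, ξ₁, ξ₂)) :
    ∃ t : ℝ,
      (τ' = τ + t * (ξ₁ * τ - ξ₂) ∧ ξ₁' = ξ₁ + t * (1 + ξ₁ ^ 2) ∧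
        ξ₂' = ξ₂ + t * (ξ₁ * ξ₂ + τ)) ∨
      (τ' = τ + t * (ξ₁ * τ + ξ₂) ∧ ξ₁' = ξ₁ + t * (1 + ξ₁ ^ 2) ∧
        ξ₂' = ξ₂ + t * (ξ₁ * ξ₂ - τ)) := by
  have h0 : (τ - τ') ^ 2 - (ξ₁ - ξ₁') ^ 2 + (ξ₂ - ξ₂') ^ 2 = 0 :=
    abs_eq_zero.mp ((Real.sqrt_eq_zero (abs_nonneg _)).mp hnull)
  have hA : (τ' - τ) ^ 2 + (ξ₂' - ξ₂) ^ 2 = (ξ₁' - ξ₁) ^ 2 := by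
    linear_combination h0
  have hB : (τ' - τ) * τ + (ξ₂' - ξ₂) * ξ₂ = (ξ₁' - ξ₁) * ξ₁ := by
    linear_combination (h' - h) / 2 - h0 / 2
  have hpos : (0:ℝ) < 1 + ξ₁ ^ 2 := by positivity
  have hsq : ((ξ₂' - ξ₂) * τ - (τ' - τ) * ξ₂ - (ξ₁' - ξ₁)) *
      ((ξ₂' - ξ₂) * τ - (τ' - τ) * ξ₂ + (ξ₁' - ξ₁)) = 0 := by
    linear_combination (ξ₁' - ξ₁) ^ 2 * h + (τ ^ 2 + ξ₂ ^ 2) * hA -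
      ((τ' - τ) * τ + (ξ₂' - ξ₂) * ξ₂ + (ξ₁' - ξ₁) * ξ₁) * hB
  refine ⟨(ξ₁' - ξ₁) / (1 + ξ₁ ^ 2), ?_⟩
  have hb : ξ₁' = ξ₁ + (ξ₁' - ξ₁) / (1 + ξ₁ ^ 2) * (1 + ξ₁ ^ 2) := by
    rw [div_mul_cancel₀ _ hpos.ne']; ring
  rcases mul_eq_zero.mp hsq with hcase | hcase
  · left
    refine ⟨?_, hb, ?_⟩
    · have e : (ξ₁' - ξ₁) / (1 + ξ₁ ^ 2) * (ξ₁ * τ - ξ₂) = τ' - τ := by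
        rw [div_mul_eq_mul_div, div_eq_iff hpos.ne']
        linear_combination -τ * hB + (τ' - τ) * h + ξ₂ * hcase
      linarith
    · have e : (ξ₁' - ξ₁) / (1 + ξ₁ ^ 2) * (ξ₁ * ξ₂ + τ) = ξ₂' - ξ₂ := by
        rw [div_mul_eq_mul_div, div_eq_iff hpos.ne']
        linear_combination -ξ₂ * hB + (ξ₂' - ξ₂) * h - τ * hcase
      linarith
  · right
    refine ⟨?_, hb, ?_⟩
    · have e : (ξ₁' - ξ₁) / (1 + ξ₁ ^ 2) * (ξ₁ * τ + ξ₂) = τ' - τ := by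
        rw [div_mul_eq_mul_div, div_eq_iff hpos.ne']
        linear_combination -τ * hB + (τ' - τ) * h + ξ₂ * hcase
      linarith
    · have e : (ξ₁' - ξ₁) / (1 + ξ₁ ^ 2) * (ξ₁ * ξ₂ - τ) = ξ₂' - ξ₂ := by
        rw [div_mul_eq_mul_div, div_eq_iff hpos.ne']
        linear_combination -ξ₂ * hB + (ξ₂' - ξ₂) * h - τ * hcase
      linarith
end

section
/- Let φ(ξ) = √(1+ξ₁²−ξ₂²) and ξ, ζ in the interior of Ω. Then the quantity ⟨(∇²φ(ξ))⁻¹(∇φ(ξ)−∇φ(ζ)), ∇φ(ξ)−∇φ(ζ)⟩ equals, up to sign and a factor φ(ξ)/φ(ζ)², the product |1 + ξ₁ζ₁ − ξ₂ζ₂ − φ(ξ)φ(ζ)| · |ξ₁ζ₁ − ξ₂ζ₂ − φ(ξ)φ(ζ) − 1|. Precisely: |⟨(∇²φ(ξ))⁻¹(∇φ(ξ)−∇φ(ζ)), ∇φ(ξ)−∇φ(ζ)⟩| = (φ(ξ)/φ(ζ)²)·|1+ξ₁ζ₁−ξ₂ζ₂−φ(ξ)φ(ζ)|·|ξ₁ζ₁−ξ₂ζ₂−φ(ξ)φ(ζ)−1|.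 -/
open Matrix

noncomputable def hypPhi : ℝ × ℝ → ℝ := fun η => Real.sqrt (1 + η.1 ^ 2 - η.2 ^ 2)

/-- The gradient of `hypPhi`. -/
noncomputable def hypGrad (η : ℝ × ℝ) : Fin 2 → ℝ :=
  ![fderiv ℝ hypPhi η (1, 0), fderiv ℝ hypPhi η (0, 1)]

/-- The Hessian matrix of `hypPhi`. -/
noncomputable def hypHess (η : ℝ × ℝ) : Matrix (Fin 2) (Fin 2) ℝ :=
  !![fderiv ℝ (fun x => fderiv ℝ hypPhi x (1, 0)) η (1, 0),
     fderiv ℝ (fun x => fderiv ℝ hypPhi x (0, 1)) η (1, 0);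
     fderiv ℝ (fun x => fderiv ℝ hypPhi x (1, 0)) η (0, 1),
     fderiv ℝ (fun x => fderiv ℝ hypPhi x (0, 1)) η (0, 1)]

noncomputable def innerD (η : ℝ × ℝ) : ℝ × ℝ →L[ℝ] ℝ :=
  (η.1 • ContinuousLinearMap.fst ℝ ℝ ℝ + η.1 • ContinuousLinearMap.fst ℝ ℝ ℝ)
    - (η.2 • ContinuousLinearMap.snd ℝ ℝ ℝ + η.2 • ContinuousLinearMap.snd ℝ ℝ ℝ)

lemma hasFDerivAt_inner (η : ℝ × ℝ) :
    HasFDerivAt (fun η : ℝ × ℝ => 1 + η.1 ^ 2 - η.2 ^ 2) (innerD η) η := by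
  have h1 : HasFDerivAt (fun η : ℝ × ℝ => η.1) (ContinuousLinearMap.fst ℝ ℝ ℝ) η := hasFDerivAt_fst
  have h2 : HasFDerivAt (fun η : ℝ × ℝ => η.2) (ContinuousLinearMap.snd ℝ ℝ ℝ) η := hasFDerivAt_snd
  have := ((h1.mul h1).const_add (1:ℝ)).sub (h2.mul h2)
  simpa [innerD, pow_two, Pi.mul_def, Pi.sub_def] using this

lemma hasFDerivAt_hypPhi (η : ℝ × ℝ) (h : 0 < 1 + η.1 ^ 2 - η.2 ^ 2) :
    HasFDerivAt hypPhi
      ((1 / (2 * Real.sqrt (1 + η.1 ^ 2 - η.2 ^ 2))) • innerD η) η := by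
  exact (Real.hasDerivAt_sqrt h.ne').comp_hasFDerivAt η (hasFDerivAt_inner η)

lemma fderiv_hypPhi (η : ℝ × ℝ) (h : 0 < 1 + η.1 ^ 2 - η.2 ^ 2) (w : ℝ × ℝ) :
    fderiv ℝ hypPhi η w = (η.1 * w.1 - η.2 * w.2) / Real.sqrt (1 + η.1 ^ 2 - η.2 ^ 2) := by
  rw [(hasFDerivAt_hypPhi η h).fderiv]
  have hs : Real.sqrt (1 + η.1 ^ 2 - η.2 ^ 2) ≠ 0 := (Real.sqrt_pos.2 h).ne'
  simp [innerD]
  field_simp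
  ring

lemma hasFDerivAt_grad (η : ℝ × ℝ) (h : 0 < 1 + η.1 ^ 2 - η.2 ^ 2) (w1 w2 : ℝ) :
    HasFDerivAt (fun x : ℝ × ℝ => (x.1 * w1 - x.2 * w2) * (Real.sqrt (1 + x.1 ^ 2 - x.2 ^ 2))⁻¹)
      ((η.1 * w1 - η.2 * w2) • (-(hypPhi η ^ 2)⁻¹ •
          ((1 / (2 * Real.sqrt (1 + η.1 ^ 2 - η.2 ^ 2))) • innerD η))
        + (hypPhi η)⁻¹ •
            (w1 • ContinuousLinearMap.fst ℝ ℝ ℝ - w2 • ContinuousLinearMap.snd ℝ ℝ ℝ)) η := by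
  have hnum : HasFDerivAt (fun x : ℝ × ℝ => x.1 * w1 - x.2 * w2)
      (w1 • ContinuousLinearMap.fst ℝ ℝ ℝ - w2 • ContinuousLinearMap.snd ℝ ℝ ℝ) η := by
    have h1 : HasFDerivAt (fun η : ℝ × ℝ => η.1) (ContinuousLinearMap.fst ℝ ℝ ℝ) η := hasFDerivAt_fst
    have h2 : HasFDerivAt (fun η : ℝ × ℝ => η.2) (ContinuousLinearMap.snd ℝ ℝ ℝ) η := hasFDerivAt_snd
    simpa [mul_comm, Pi.sub_def] using (h1.mul_const w1).sub (h2.mul_const w2)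
  have hd0 : hypPhi η ≠ 0 := (Real.sqrt_pos.2 h).ne'
  have hinv : HasFDerivAt (fun x : ℝ × ℝ => (Real.sqrt (1 + x.1 ^ 2 - x.2 ^ 2))⁻¹)
      (-(hypPhi η ^ 2)⁻¹ • ((1 / (2 * Real.sqrt (1 + η.1 ^ 2 - η.2 ^ 2))) • innerD η)) η := by
    have := (hasDerivAt_inv (x := hypPhi η) hd0).comp_hasFDerivAt η (hasFDerivAt_hypPhi η h)
    exact this
  exact hnum.mul hinv

lemma fderiv_grad (η : ℝ × ℝ) (h : 0 < 1 + η.1 ^ 2 - η.2 ^ 2) (w1 w2 : ℝ) (v : ℝ × ℝ) :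
    fderiv ℝ (fun x => fderiv ℝ hypPhi x (w1, w2)) η v
      = (w1 * v.1 - w2 * v.2) / hypPhi η
          - (η.1 * w1 - η.2 * w2) * (η.1 * v.1 - η.2 * v.2) / hypPhi η ^ 3 := by
  have hU : IsOpen {x : ℝ × ℝ | 0 < 1 + x.1 ^ 2 - x.2 ^ 2} := by
    apply isOpen_lt continuous_const
    fun_prop
  have hev : (fun x => fderiv ℝ hypPhi x (w1, w2)) =ᶠ[nhds η]
      (fun x : ℝ × ℝ => (x.1 * w1 - x.2 * w2) * (Real.sqrt (1 + x.1 ^ 2 - x.2 ^ 2))⁻¹) := by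
    filter_upwards [hU.mem_nhds h] with x hx
    rw [fderiv_hypPhi x hx (w1, w2), div_eq_mul_inv]
  rw [hev.fderiv_eq, (hasFDerivAt_grad η h w1 w2).fderiv]
  have hp : 0 < hypPhi η := Real.sqrt_pos.2 h
  have hsq : hypPhi η ^ 2 = 1 + η.1 ^ 2 - η.2 ^ 2 := Real.sq_sqrt h.le
  simp [innerD, hypPhi]
  rw [show Real.sqrt (1 + η.1 ^ 2 - η.2 ^ 2) = hypPhi η from rfl]
  field_simp
  ring


/-- The transversality quantity `⟨(∇²φ(ξ))⁻¹(∇φ(ξ)−∇φ(ζ)), ∇φ(ξ)−∇φ(ζ)⟩`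
equals in absolute value
`(φ(ξ)/φ(ζ)²)·|1+ξ₁ζ₁−ξ₂ζ₂−φ(ξ)φ(ζ)|·|ξ₁ζ₁−ξ₂ζ₂−φ(ξ)φ(ζ)−1|`. -/
theorem transversality_eq_lorentz_separation (ξ₁ ξ₂ ζ₁ ζ₂ : ℝ)
    (hξ : 1 + ξ₁ ^ 2 - ξ₂ ^ 2 > 0) (hζ : 1 + ζ₁ ^ 2 - ζ₂ ^ 2 > 0)
    (hinv : IsUnit (hypHess (ξ₁, ξ₂))) :
    |(hypGrad (ξ₁, ξ₂) - hypGrad (ζ₁, ζ₂)) ⬝ᵥ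
        ((hypHess (ξ₁, ξ₂))⁻¹ *ᵥ (hypGrad (ξ₁, ξ₂) - hypGrad (ζ₁, ζ₂)))|
      = (hypPhi (ξ₁, ξ₂) / (hypPhi (ζ₁, ζ₂)) ^ 2)
        * |1 + ξ₁ * ζ₁ - ξ₂ * ζ₂ - hypPhi (ξ₁, ξ₂) * hypPhi (ζ₁, ζ₂)|
        * |ξ₁ * ζ₁ - ξ₂ * ζ₂ - hypPhi (ξ₁, ξ₂) * hypPhi (ζ₁, ζ₂) - 1| := by
  set p := hypPhi (ξ₁, ξ₂) with hpdef
  set q := hypPhi (ζ₁, ζ₂) with hqdef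
  have hp0 : 0 < p := Real.sqrt_pos.2 hξ
  have hq0 : 0 < q := Real.sqrt_pos.2 hζ
  have hp2 : p ^ 2 = 1 + ξ₁ ^ 2 - ξ₂ ^ 2 := Real.sq_sqrt hξ.le
  have hq2 : q ^ 2 = 1 + ζ₁ ^ 2 - ζ₂ ^ 2 := Real.sq_sqrt hζ.le
  have hpne : p ≠ 0 := hp0.ne'
  have hqne : q ≠ 0 := hq0.ne'
  -- gradients
  have hgξ : hypGrad (ξ₁, ξ₂) = ![ξ₁ / p, -ξ₂ / p] := by
    unfold hypGrad
    rw [fderiv_hypPhi _ hξ, fderiv_hypPhi _ hξ]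
    norm_num [hpdef, hypPhi]
  have hgζ : hypGrad (ζ₁, ζ₂) = ![ζ₁ / q, -ζ₂ / q] := by
    unfold hypGrad
    rw [fderiv_hypPhi _ hζ, fderiv_hypPhi _ hζ]
    norm_num [hqdef, hypPhi]
  -- Hessian
  have hH : hypHess (ξ₁, ξ₂) =
      !![1 / p - ξ₁ ^ 2 / p ^ 3, ξ₁ * ξ₂ / p ^ 3;
         ξ₁ * ξ₂ / p ^ 3, -(1 / p) - ξ₂ ^ 2 / p ^ 3] := by
    unfold hypHess
    have hne2 : hypPhi (ξ₁, ξ₂) ≠ 0 := hpne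
    ext i j
    fin_cases i <;> fin_cases j <;>
      simp [hpdef] <;>
      first
        | (rw [fderiv_grad _ hξ]; field_simp [hne2]; first | done | ring | tauto)
        | tauto
  -- the inverse of the Hessian
  set B : Matrix (Fin 2) (Fin 2) ℝ :=
    !![p * (1 + ξ₁ ^ 2), p * (ξ₁ * ξ₂); p * (ξ₁ * ξ₂), p * (ξ₂ ^ 2 - 1)] with hBdef
  have hHB : hypHess (ξ₁, ξ₂) * B = 1 := by
    rw [hH, hBdef]
    ext i j
    fin_cases i <;> fin_cases j
    · simp [Matrix.mul_apply, Fin.sum_univ_two]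
      field_simp
      linear_combination (ξ₁ ^ 2) * hp2
    · simp [Matrix.mul_apply, Fin.sum_univ_two]
      field_simp
      linear_combination (ξ₁ * ξ₂) * hp2
    · simp [Matrix.mul_apply, Fin.sum_univ_two]
      field_simp
      linear_combination (-(ξ₁ * ξ₂)) * hp2
    · simp [Matrix.mul_apply, Fin.sum_univ_two]
      field_simp
      linear_combination (-(ξ₂ ^ 2)) * hp2
  have hBinv : (hypHess (ξ₁, ξ₂))⁻¹ = B := Matrix.inv_eq_right_inv hHB
  -- reduce to scalar computation
  rw [hBinv, hgξ, hgζ]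
  have hexp : (![ξ₁ / p, -ξ₂ / p] - ![ζ₁ / q, -ζ₂ / q]) ⬝ᵥ
      (B *ᵥ (![ξ₁ / p, -ξ₂ / p] - ![ζ₁ / q, -ζ₂ / q]))
      = p * ((1 + (ξ₁ * ζ₁ - ξ₂ * ζ₂) - p * q) * ((ξ₁ * ζ₁ - ξ₂ * ζ₂) - p * q - 1)) / q ^ 2 := by
    simp [hBdef, Matrix.mulVec, dotProduct, Fin.sum_univ_two]
    field_simp
    linear_combination (-(q ^ 2 * p ^ 2 + q ^ 2 * (ξ₁ ^ 2 - ξ₂ ^ 2) - 2 * p * q * (ξ₁ * ζ₁ - ξ₂ * ζ₂))) * hp2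
      + (-(p ^ 2)) * hq2
  rw [hexp]
  rw [abs_div, abs_mul]
  rw [abs_of_pos hp0, abs_of_pos (pow_pos hq0 2), abs_mul]
  ring
end
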